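/- Let (X,d) be a Hadamard space, let K ≥ 1 be an integer, let w₁,…,w_K > 0 and let a, b ∈ X. If G₀,…,G_K ∈ X satisfy G₀ = a, G_K = b and ∑_{k=1}^K w_k · d(G_k, G_{k−1})² = d(a,b)² / (∑_{i=1}^K w_i⁻¹), then there exists a geodesic γ : [0,1] → X from a to b such that G_k = γ(t_k) for every k = 0,…,K, where t_k := (∑_{i=1}^k w_i⁻¹)/(∑_{i=1}^K w_i⁻¹). -/

import Mathlib

open Finset

/-- The parameter values `t_k = (∑_{i=1}^k w_i⁻¹) / (∑_{i=1}^K w_i⁻¹)`. -/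
noncomputable def geodParam (w : ℕ → ℝ) (K k : ℕ) : ℝ :=
  (∑ i ∈ Finset.Icc 1 k, (w i)⁻¹) / (∑ i ∈ Finset.Icc 1 K, (w i)⁻¹)

/-- In a Hadamard space, any tuple `G₀,…,G_K` joining `a` to `b` whose
weighted discrete energy attains the minimal value `d(a,b)² / ∑ w_i⁻¹` lies on a
geodesic from `a` to `b`, sampled at the parameters `t_k`. -/
theorem energy_minimizer_lies_on_geodesic
    {X : Type*} [MetricSpace X] [CompleteSpace X]
    (hgeo : ∀ x y : X, ∃ γ : ℝ → X, γ 0 = x ∧ γ 1 = y ∧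
      ∀ s ∈ Set.Icc (0:ℝ) 1, ∀ t ∈ Set.Icc (0:ℝ) 1,
        dist (γ s) (γ t) = |s - t| * dist x y)
    (h4 : ∀ x y v w : X, dist x v ^ 2 + dist y w ^ 2 ≤
      dist x w ^ 2 + dist y v ^ 2 + 2 * dist x y * dist v w)
    (K : ℕ) (hK : 1 ≤ K)
    (w : ℕ → ℝ) (hw : ∀ k ∈ Finset.Icc 1 K, 0 < w k)
    (a b : X) (G : ℕ → X) (hG0 : G 0 = a) (hGK : G K = b)
    (henergy : ∑ k ∈ Finset.Icc 1 K, w k * dist (G k) (G (k - 1)) ^ 2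
      = dist a b ^ 2 / ∑ i ∈ Finset.Icc 1 K, (w i)⁻¹) :
    ∃ γ : ℝ → X, γ 0 = a ∧ γ 1 = b ∧
      (∀ s ∈ Set.Icc (0:ℝ) 1, ∀ t ∈ Set.Icc (0:ℝ) 1,
        dist (γ s) (γ t) = |s - t| * dist a b) ∧
      ∀ k ≤ K, G k = γ (geodParam w K k) := by
  obtain ⟨γ, hγ0, hγ1, hγd⟩ := hgeo a b
  refine ⟨γ, hγ0, hγ1, hγd, ?_⟩
  set L := dist a b with hLdef
  set S := ∑ i ∈ Finset.Icc 1 K, (w i)⁻¹ with hSdef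
  have hSpos : 0 < S :=
    Finset.sum_pos (fun i hi => inv_pos.2 (hw i hi)) ⟨1, by simp [hK]⟩
  set c := L / S with hcdef
  have hc0 : 0 ≤ c := div_nonneg dist_nonneg hSpos.le
  -- telescoping inequality
  have tele : ∀ m n : ℕ, dist (G m) (G (m + n)) ≤
      ∑ i ∈ Finset.Icc (m + 1) (m + n), dist (G i) (G (i - 1)) := by
    intro m n
    calc dist (G m) (G (m + n)) ≤
        ∑ i ∈ Finset.range n, dist (G (m + i)) (G (m + i + 1)) :=
          dist_le_range_sum_dist (fun i => G (m + i)) n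
      _ = ∑ i ∈ Finset.Icc (m + 1) (m + n), dist (G i) (G (i - 1)) := by
          rw [← Finset.Ico_add_one_right_eq_Icc, Finset.sum_Ico_eq_sum_range]
          have hn : m + n + 1 - (m + 1) = n := by omega
          rw [hn]
          refine Finset.sum_congr rfl fun i _ => ?_
          have h1 : m + 1 + i - 1 = m + i := by omega
          have h2 : m + 1 + i = m + i + 1 := by omega
          rw [h1, h2, dist_comm]
  have htri : L ≤ ∑ i ∈ Finset.Icc 1 K, dist (G i) (G (i - 1)) := by
    have := tele 0 K
    simpa [hG0, hGK] using this
  -- each step has exact length c * (w i)⁻¹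
  have key : ∀ i ∈ Finset.Icc 1 K, dist (G i) (G (i - 1)) = c * (w i)⁻¹ := by
    have hE : ∑ i ∈ Finset.Icc 1 K,
        w i * (dist (G i) (G (i - 1)) - c * (w i)⁻¹) ^ 2
        = 2 * c * (L - ∑ i ∈ Finset.Icc 1 K, dist (G i) (G (i - 1))) := by
      have expand : ∀ i ∈ Finset.Icc 1 K,
          w i * (dist (G i) (G (i - 1)) - c * (w i)⁻¹) ^ 2
          = w i * dist (G i) (G (i - 1)) ^ 2
            - 2 * c * dist (G i) (G (i - 1)) + c ^ 2 * (w i)⁻¹ := by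
        intro i hi
        have hwi : w i ≠ 0 := (hw i hi).ne'
        field_simp
        ring
      rw [Finset.sum_congr rfl expand]
      rw [Finset.sum_add_distrib, Finset.sum_sub_distrib, ← Finset.mul_sum,
        ← Finset.mul_sum, henergy]
      rw [hcdef]
      field_simp
      ring_nf
      rw [← hSdef]
      ring
    have hE0 : ∑ i ∈ Finset.Icc 1 K,
        w i * (dist (G i) (G (i - 1)) - c * (w i)⁻¹) ^ 2 = 0 := by
      have h1 : (0:ℝ) ≤ ∑ i ∈ Finset.Icc 1 K,
          w i * (dist (G i) (G (i - 1)) - c * (w i)⁻¹) ^ 2 :=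
        Finset.sum_nonneg fun i hi =>
          mul_nonneg (hw i hi).le (sq_nonneg _)
      have h2 : 2 * c * (L - ∑ i ∈ Finset.Icc 1 K, dist (G i) (G (i - 1))) ≤ 0 := by
        nlinarith
      linarith [hE ▸ h1, hE ▸ h2]
    intro i hi
    have := (Finset.sum_eq_zero_iff_of_nonneg
      (fun i hi => mul_nonneg (hw i hi).le (sq_nonneg _))).1 hE0 i hi
    have hwi : w i ≠ 0 := (hw i hi).ne'
    have hsq : (dist (G i) (G (i - 1)) - c * (w i)⁻¹) ^ 2 = 0 := by
      rcases mul_eq_zero.1 this with h | h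
      · exact absurd h hwi
      · exact h
    have := pow_eq_zero_iff (n := 2) (by norm_num) |>.1 hsq
    linarith
  intro k hk
  set t := geodParam w K k with htdef
  set P := ∑ i ∈ Finset.Icc 1 k, (w i)⁻¹ with hPdef
  have hsub : Finset.Icc 1 k ⊆ Finset.Icc 1 K := Finset.Icc_subset_Icc_right hk
  have hP0 : 0 ≤ P := Finset.sum_nonneg fun i hi => (inv_pos.2 (hw i (hsub hi))).le
  have hPS : P ≤ S := Finset.sum_le_sum_of_subset_of_nonneg hsub
    (fun i hi _ => (inv_pos.2 (hw i hi)).le)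
  have ht0 : 0 ≤ t := div_nonneg hP0 hSpos.le
  have ht1 : t ≤ 1 := by
    rw [htdef, geodParam, div_le_one hSpos]
    exact hPS
  have htP : t = P / S := rfl
  -- dist a (G k) ≤ t * L
  have hta : dist a (G k) ≤ t * L := by
    have h1 : dist (G 0) (G (0 + k)) ≤
        ∑ i ∈ Finset.Icc 1 k, dist (G i) (G (i - 1)) := by simpa using tele 0 k
    have h2 : ∑ i ∈ Finset.Icc 1 k, dist (G i) (G (i - 1)) = c * P := by
      have : ∑ i ∈ Finset.Icc 1 k, dist (G i) (G (i - 1))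
          = ∑ i ∈ Finset.Icc 1 k, c * (w i)⁻¹ :=
        Finset.sum_congr rfl fun i hi => key i (hsub hi)
      rw [this, ← Finset.mul_sum]
    have : dist a (G k) ≤ c * P := by
      rw [← hG0]; simpa [h2] using h1
    calc dist a (G k) ≤ c * P := this
      _ = t * L := by rw [htP, hcdef]; field_simp
  -- dist (G k) b ≤ (1 - t) * L
  have htb : dist (G k) b ≤ (1 - t) * L := by
    have h1 : dist (G k) (G (k + (K - k))) ≤
        ∑ i ∈ Finset.Icc (k + 1) (k + (K - k)), dist (G i) (G (i - 1)) :=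
      tele k (K - k)
    have hkK : k + (K - k) = K := by omega
    rw [hkK] at h1
    have h2 : ∑ i ∈ Finset.Icc (k + 1) K, dist (G i) (G (i - 1))
        = c * (S - P) := by
      have hsplit : P + ∑ i ∈ Finset.Icc (k + 1) K, (w i)⁻¹ = S := by
        rw [hPdef, hSdef]
        have e1 : Finset.Icc 1 k = Finset.Ioc 0 k := by
          ext i; simp [Nat.lt_iff_add_one_le]
        have e2 : Finset.Icc (k + 1) K = Finset.Ioc k K := by
          ext i; simp only [Finset.mem_Icc, Finset.mem_Ioc]; omega
        have e3 : Finset.Icc 1 K = Finset.Ioc 0 K := by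
          ext i; simp [Nat.lt_iff_add_one_le]
        rw [e1, e2, e3]
        exact Finset.sum_Ioc_consecutive _ (Nat.zero_le k) hk
      have : ∑ i ∈ Finset.Icc (k + 1) K, dist (G i) (G (i - 1))
          = ∑ i ∈ Finset.Icc (k + 1) K, c * (w i)⁻¹ := by
        refine Finset.sum_congr rfl fun i hi => ?_
        apply key
        simp only [Finset.mem_Icc] at hi ⊢
        omega
      rw [this, ← Finset.mul_sum]
      congr 1
      linarith
    calc dist (G k) b ≤ c * (S - P) := by rw [← hGK]; simpa [h2] using h1
      _ = (1 - t) * L := by rw [htP, hcdef]; field_simp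
  -- geodesic point distances
  have hqa : dist (γ t) a = t * L := by
    have := hγd t ⟨ht0, ht1⟩ 0 ⟨le_refl 0, zero_le_one⟩
    rw [hγ0] at this
    rw [this, abs_of_nonneg (by linarith : (0:ℝ) ≤ t - 0)]
    ring_nf
  have hbq : dist b (γ t) = (1 - t) * L := by
    have := hγd 1 ⟨zero_le_one, le_refl 1⟩ t ⟨ht0, ht1⟩
    rw [hγ1] at this
    rw [this, abs_of_nonneg (by linarith : (0:ℝ) ≤ 1 - t)]
  -- four point inequality
  have h4' := h4 (G k) b (γ t) a
  have hba : dist b a = L := dist_comm b a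
  have hka : dist (G k) a = dist a (G k) := dist_comm _ _
  have hzero : dist (G k) (γ t) = 0 := by
    nlinarith [dist_nonneg (x := G k) (y := γ t), dist_nonneg (x := a) (y := G k),
      dist_nonneg (x := G k) (y := b), dist_nonneg (x := a) (y := b),
      mul_nonneg ht0 dist_nonneg (b := L)]
  exact dist_eq_zero.1 hzero
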